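/- Let K be a field, and let f, g ∈ K[x] be polynomials of degree 3. Suppose there exist two distinct unordered pairs {x₁, y₁} ≠ {x₂, y₂} of elements of K with x₁ ≠ y₁ and x₂ ≠ y₂ such that f(x₁) = f(y₁), f(x₂) = f(y₂), g(x₁) = g(y₁), and g(x₂) = g(y₂). Then there exists a linear polynomial ℓ(x) = cx + e with c ≠ 0 such that f = ℓ ∘ g. -/

import Mathlib

open Polynomial

theorem stmt_2 {K : Type*} [Field K]
    (f g : K[X]) (hf : f.natDegree = 3) (hg : g.natDegree = 3)
    (x₁ y₁ x₂ y₂ : K) (h₁ : x₁ ≠ y₁) (h₂ : x₂ ≠ y₂)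
    (hpairs : ({x₁, y₁} : Set K) ≠ ({x₂, y₂} : Set K))
    (hf₁ : f.eval x₁ = f.eval y₁) (hf₂ : f.eval x₂ = f.eval y₂)
    (hg₁ : g.eval x₁ = g.eval y₁) (hg₂ : g.eval x₂ = g.eval y₂) :
    ∃ c e : K, c ≠ 0 ∧ f = (C c * X + C e).comp g := by
  have hfne : f ≠ 0 := fun h => by simp [h] at hf
  have hgne : g ≠ 0 := fun h => by simp [h] at hg
  have ha3 : f.coeff 3 ≠ 0 := by
    have := leadingCoeff_ne_zero.mpr hfne
    rwa [leadingCoeff, hf] at this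
  have hb3 : g.coeff 3 ≠ 0 := by
    have := leadingCoeff_ne_zero.mpr hgne
    rwa [leadingCoeff, hg] at this
  have d₁ : x₁ - y₁ ≠ 0 := sub_ne_zero.mpr h₁
  have d₂ : x₂ - y₂ ≠ 0 := sub_ne_zero.mpr h₂
  have key : ∀ (p : K[X]), p.natDegree = 3 → ∀ x y : K, x - y ≠ 0 →
      p.eval x = p.eval y →
      p.coeff 3 * (x^2 + x*y + y^2) + p.coeff 2 * (x + y) + p.coeff 1 = 0 := by
    intro p hp x y hxy he
    rw [eval_eq_sum_range, eval_eq_sum_range, hp] at he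
    simp [Finset.sum_range_succ] at he
    have h0 : (x - y) * (p.coeff 3 * (x^2 + x*y + y^2) + p.coeff 2 * (x + y) + p.coeff 1) = 0 := by
      linear_combination he
    rcases mul_eq_zero.mp h0 with h | h
    · exact absurd h hxy
    · exact h
  have E1 := key f hf x₁ y₁ d₁ hf₁
  have E2 := key f hf x₂ y₂ d₂ hf₂
  have F1 := key g hg x₁ y₁ d₁ hg₁
  have F2 := key g hg x₂ y₂ d₂ hg₂
  have hs : x₁ + y₁ ≠ x₂ + y₂ := by
    intro hs
    have hp0 : f.coeff 3 * ((x₁^2 + x₁*y₁ + y₁^2) - (x₂^2 + x₂*y₂ + y₂^2)) = 0 := by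
      linear_combination E1 - E2 - f.coeff 2 * hs
    have hp : x₁^2 + x₁*y₁ + y₁^2 = x₂^2 + x₂*y₂ + y₂^2 := by
      rcases mul_eq_zero.mp hp0 with h | h
      · exact absurd h ha3
      · exact sub_eq_zero.mp h
    have hq : x₁*y₁ = x₂*y₂ := by
      linear_combination (x₁ + y₁ + x₂ + y₂) * hs - hp
    have hx2 : (x₂ - x₁) * (x₂ - y₁) = 0 := by
      linear_combination -x₂ * hs + hq
    have hy2 : (y₂ - x₁) * (y₂ - y₁) = 0 := by
      linear_combination -y₂ * hs + hq
    apply hpairs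
    rcases mul_eq_zero.mp hx2 with h | h
    · have hx : x₂ = x₁ := sub_eq_zero.mp h
      rcases mul_eq_zero.mp hy2 with h' | h'
      · have : y₂ = x₁ := sub_eq_zero.mp h'
        exact absurd (hx.trans this.symm) h₂
      · have hy : y₂ = y₁ := sub_eq_zero.mp h'
        rw [hx, hy]
    · have hx : x₂ = y₁ := sub_eq_zero.mp h
      rcases mul_eq_zero.mp hy2 with h' | h'
      · have hy : y₂ = x₁ := sub_eq_zero.mp h'
        rw [hx, hy, Set.pair_comm]
      · have : y₂ = y₁ := sub_eq_zero.mp h'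
        exact absurd (hx.trans this.symm) h₂
  have hds : x₁ + y₁ - (x₂ + y₂) ≠ 0 := sub_ne_zero.mpr hs
  have hA : f.coeff 2 * g.coeff 3 = f.coeff 3 * g.coeff 2 := by
    have h0 : (x₁ + y₁ - (x₂ + y₂)) * (f.coeff 2 * g.coeff 3 - f.coeff 3 * g.coeff 2) = 0 := by
      linear_combination g.coeff 3 * E1 - g.coeff 3 * E2 - f.coeff 3 * F1 + f.coeff 3 * F2
    rcases mul_eq_zero.mp h0 with h | h
    · exact absurd h hds
    · exact sub_eq_zero.mp h
  have hB : f.coeff 1 * g.coeff 3 = f.coeff 3 * g.coeff 1 := by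
    linear_combination g.coeff 3 * E1 - f.coeff 3 * F1 - (x₁ + y₁) * hA
  refine ⟨f.coeff 3 / g.coeff 3,
    f.coeff 0 - f.coeff 3 / g.coeff 3 * g.coeff 0, div_ne_zero ha3 hb3, ?_⟩
  have hcomp : (C (f.coeff 3 / g.coeff 3) * X
      + C (f.coeff 0 - f.coeff 3 / g.coeff 3 * g.coeff 0)).comp g
      = C (f.coeff 3 / g.coeff 3) * g + C (f.coeff 0 - f.coeff 3 / g.coeff 3 * g.coeff 0) := by
    simp [add_comp, mul_comp]
  rw [hcomp]
  ext n
  simp only [coeff_add, coeff_C_mul, coeff_C]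
  match n with
  | 0 => simp only [if_pos rfl, if_true]; field_simp; ring
  | 1 => simp only [if_neg one_ne_zero, add_zero]; field_simp; linear_combination hB
  | 2 => simp only [Nat.succ_ne_zero, if_neg, if_false, add_zero]; field_simp; linear_combination hA
  | 3 => simp only [Nat.succ_ne_zero, if_neg, if_false, add_zero]; field_simp
  | (n+4) =>
    rw [coeff_eq_zero_of_natDegree_lt (by omega : f.natDegree < n+4),
        coeff_eq_zero_of_natDegree_lt (by omega : g.natDegree < n+4)]
    simp
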